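/- (Shadow bound) Let Λ be an operator with 0 ≤ Λ ≤ I and ρ a density operator on ℂ^D such that for some λ, μ₁, μ₂ > 0 one has Tr(ρΛ) ≥ 1 − λ and μ₁Λ ≤ √Λ ρ √Λ ≤ μ₂Λ. Then (1−λ)/μ₂ ≤ Tr Λ ≤ 1/μ₁. Moreover, for every operator B with 0 ≤ B ≤ I and Tr(ρB) ≥ η one has Tr B ≥ (η − √(8λ))/μ₂; if in addition ρ and Λ commute, then Tr B ≥ (η − λ)/μ₂. -/

import Mathlib

open scoped ComplexOrder Matrix

namespace QIT

variable {d : ℕ}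

/-- The positive semidefinite square root of a positive semidefinite matrix (the definition
`Matrix.PosSemidef.sqrt` of the older Mathlib, which has since been removed). -/
noncomputable def _root_.Matrix.PosSemidef.sqrt {n : Type*} [Fintype n] [DecidableEq n]
    {A : Matrix n n ℂ} (hA : A.PosSemidef) : Matrix n n ℂ :=
  (hA.1.eigenvectorUnitary : Matrix n n ℂ) *
    Matrix.diagonal (fun i => ((Real.sqrt (hA.1.eigenvalues i) : ℝ) : ℂ)) *
    (star hA.1.eigenvectorUnitary : Matrix n n ℂ)

/-- A density operator: positive semidefinite with trace 1. -/
def IsDensity (ρ : Matrix (Fin d) (Fin d) ℂ) : Prop :=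
  ρ.PosSemidef ∧ ρ.trace = 1

/-- A pure state: a rank-one orthogonal projection. -/
def IsPure (ρ : Matrix (Fin d) (Fin d) ℂ) : Prop :=
  ρ.IsHermitian ∧ ρ * ρ = ρ ∧ ρ.rank = 1

/-- Trace norm of a matrix: `Tr √(Aᴴ A)`. -/
noncomputable def traceNorm (A : Matrix (Fin d) (Fin d) ℂ) : ℝ :=
  ((Matrix.posSemidef_conjTranspose_mul_self A).sqrt.trace).re

section helpers

variable {n : Type*} [Fintype n] [DecidableEq n]

lemma _root_.Matrix.PosSemidef.posSemidef_sqrt {A : Matrix n n ℂ} (hA : A.PosSemidef) :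
    hA.sqrt.PosSemidef := by
  have hD : (Matrix.diagonal (fun i => ((Real.sqrt (hA.1.eigenvalues i) : ℝ) : ℂ))).PosSemidef := by
    rw [Matrix.posSemidef_diagonal_iff]
    intro i
    exact_mod_cast Real.sqrt_nonneg _
  have := hD.conjTranspose_mul_mul_same (star hA.1.eigenvectorUnitary : Matrix n n ℂ)
  unfold Matrix.PosSemidef.sqrt
  convert this using 2
  simp [Matrix.star_eq_conjTranspose]

lemma _root_.Matrix.PosSemidef.sqrt_mul_self {A : Matrix n n ℂ} (hA : A.PosSemidef) :
    hA.sqrt * hA.sqrt = A := by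
  conv_rhs => rw [hA.1.spectral_theorem, Unitary.conjStarAlgAut_apply]
  unfold Matrix.PosSemidef.sqrt
  have hU : (star hA.1.eigenvectorUnitary : Matrix n n ℂ) * (hA.1.eigenvectorUnitary : Matrix n n ℂ)
      = 1 := Unitary.coe_star_mul_self _
  have hDD : Matrix.diagonal (fun i => ((Real.sqrt (hA.1.eigenvalues i) : ℝ) : ℂ)) *
      Matrix.diagonal (fun i => ((Real.sqrt (hA.1.eigenvalues i) : ℝ) : ℂ))
      = Matrix.diagonal (RCLike.ofReal ∘ hA.1.eigenvalues) := by
    rw [Matrix.diagonal_mul_diagonal]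
    congr 1
    funext i
    simp only [Function.comp_apply]
    rw [← Complex.ofReal_mul, Real.mul_self_sqrt (hA.eigenvalues_nonneg i)]
    rfl
  calc _ = (hA.1.eigenvectorUnitary : Matrix n n ℂ) *
      (Matrix.diagonal (fun i => ((Real.sqrt (hA.1.eigenvalues i) : ℝ) : ℂ)) *
      ((star hA.1.eigenvectorUnitary : Matrix n n ℂ) * (hA.1.eigenvectorUnitary : Matrix n n ℂ)) *
      Matrix.diagonal (fun i => ((Real.sqrt (hA.1.eigenvalues i) : ℝ) : ℂ))) *
      (star hA.1.eigenvectorUnitary : Matrix n n ℂ) := by simp only [Matrix.mul_assoc]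
    _ = _ := by rw [hU, Matrix.mul_one, hDD]

lemma entry_nonneg {P : Matrix n n ℂ} (hP : P.PosSemidef) (i : n) : 0 ≤ P i i := by
  simpa [dotProduct, Matrix.mulVec, Pi.single_apply] using hP.dotProduct_mulVec_nonneg (Pi.single i 1)

lemma trace_nonneg' {P : Matrix n n ℂ} (hP : P.PosSemidef) : 0 ≤ P.trace :=
  Finset.sum_nonneg fun i _ => entry_nonneg hP i

lemma trace_mul_nonneg {P Q : Matrix n n ℂ} (hP : P.PosSemidef) (hQ : Q.PosSemidef) :
    0 ≤ (P * Q).trace := by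
  have h1 : (hP.sqrt * Q * hP.sqrt).trace = (P * Q).trace := by
    rw [Matrix.trace_mul_cycle, hP.sqrt_mul_self]
  have h2 := hQ.conjTranspose_mul_mul_same hP.sqrt
  rw [hP.posSemidef_sqrt.1] at h2
  rw [← h1]
  exact trace_nonneg' h2

lemma trace_mul_re_mono {P X Y : Matrix n n ℂ} (hP : P.PosSemidef)
    (h : (Y - X).PosSemidef) : ((P * X).trace).re ≤ ((P * Y).trace).re := by
  have h0 := (Complex.nonneg_iff.mp (trace_mul_nonneg hP h)).1
  rw [Matrix.mul_sub, Matrix.trace_sub, Complex.sub_re] at h0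
  linarith

lemma dot_cs {ι : Type*} [Fintype ι] (x y : ι → ℂ) :
    ‖star x ⬝ᵥ y‖ ≤
      Real.sqrt (star x ⬝ᵥ x).re * Real.sqrt (star y ⬝ᵥ y).re := by
  let e := (WithLp.equiv 2 (ι → ℂ)).symm
  have key : ∀ a b : ι → ℂ, (inner ℂ (e a) (e b) : ℂ) = star a ⬝ᵥ b := by
    intro a b
    simp [PiLp.inner_apply, RCLike.inner_apply, dotProduct, Pi.star_apply,
      RCLike.star_def, e, mul_comm]
  have h2 := norm_inner_le_norm (𝕜 := ℂ) (e x) (e y)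
  rw [norm_eq_sqrt_re_inner (𝕜 := ℂ) (e x), norm_eq_sqrt_re_inner (𝕜 := ℂ) (e y)] at h2
  calc ‖star x ⬝ᵥ y‖ = ‖(inner ℂ (e x) (e y) : ℂ)‖ := by
        rw [key]
    _ ≤ _ := h2
    _ = Real.sqrt (star x ⬝ᵥ x).re * Real.sqrt (star y ⬝ᵥ y).re := by
        rw [key, key]; norm_num [RCLike.re_to_complex]

lemma trace_cs {m : Type*} [Fintype m] (X Y : Matrix m m ℂ) :
    ‖(Xᴴ * Y).trace‖ ≤
      Real.sqrt ((Xᴴ * X).trace.re) * Real.sqrt ((Yᴴ * Y).trace.re) := by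
  have key : ∀ A B : Matrix m m ℂ, (Aᴴ * B).trace
      = star (fun p : m × m => A p.1 p.2) ⬝ᵥ (fun p : m × m => B p.1 p.2) := by
    intro A B
    simp only [Matrix.trace, Matrix.diag, Matrix.mul_apply, Matrix.conjTranspose_apply,
      dotProduct, Fintype.sum_prod_type, Pi.star_apply, RCLike.star_def]
    exact Finset.sum_comm
  rw [key, key, key]
  exact dot_cs _ _

lemma one_sub_sqrt {Λ : Matrix n n ℂ}
    (hΛ : Λ.PosSemidef) (hΛ1 : ((1 : Matrix n n ℂ) - Λ).PosSemidef) :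
    ((1 : Matrix n n ℂ) - hΛ.sqrt).PosSemidef := by
  set A := hΛ.sqrt with hAdef
  refine .of_dotProduct_mulVec_nonneg (Matrix.isHermitian_one.sub hΛ.posSemidef_sqrt.1) fun x => ?_
  have hz : 0 ≤ star x ⬝ᵥ A *ᵥ x := hΛ.posSemidef_sqrt.dotProduct_mulVec_nonneg x
  have hw : (0:ℂ) ≤ star x ⬝ᵥ x := by
    simpa using Matrix.PosSemidef.one (n := n) (R := ℂ) |>.dotProduct_mulVec_nonneg x
  rw [Matrix.sub_mulVec, dotProduct_sub, Matrix.one_mulVec, sub_nonneg]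
  have hwre : 0 ≤ (star x ⬝ᵥ x).re := (Complex.nonneg_iff.mp hw).1
  have hu : star (A *ᵥ x) ⬝ᵥ (A *ᵥ x) = star x ⬝ᵥ Λ *ᵥ x := by
    rw [Matrix.star_mulVec, ← Matrix.dotProduct_mulVec, Matrix.mulVec_mulVec,
      hΛ.posSemidef_sqrt.1, hAdef, hΛ.sqrt_mul_self]
  have hΛle : (star x ⬝ᵥ Λ *ᵥ x).re ≤ (star x ⬝ᵥ x).re := by
    have h0 := (Complex.nonneg_iff.mp (hΛ1.dotProduct_mulVec_nonneg x)).1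
    rw [Matrix.sub_mulVec, dotProduct_sub, Matrix.one_mulVec, Complex.sub_re] at h0
    linarith
  have hcs := dot_cs x (A *ᵥ x)
  rw [hu] at hcs
  have hre : (star x ⬝ᵥ A *ᵥ x).re ≤ (star x ⬝ᵥ x).re := by
    calc (star x ⬝ᵥ A *ᵥ x).re ≤ ‖star x ⬝ᵥ A *ᵥ x‖ := Complex.re_le_norm _
      _ ≤ Real.sqrt (star x ⬝ᵥ x).re * Real.sqrt (star x ⬝ᵥ Λ *ᵥ x).re := hcs
      _ ≤ Real.sqrt (star x ⬝ᵥ x).re * Real.sqrt (star x ⬝ᵥ x).re :=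
          mul_le_mul_of_nonneg_left (Real.sqrt_le_sqrt hΛle) (Real.sqrt_nonneg _)
      _ = (star x ⬝ᵥ x).re := Real.mul_self_sqrt hwre
  rw [Complex.le_def]
  exact ⟨hre, by rw [(Complex.nonneg_iff.mp hz).2.symm, (Complex.nonneg_iff.mp hw).2.symm]⟩

lemma trace_conjTranspose_mul_self_eq_zero' {M : Matrix n n ℂ}
    (h : (Mᴴ * M).trace = 0) : M = 0 := by
  have hre : ∑ j : n, ∑ k : n, Complex.normSq (M k j) = 0 := by
    have := congrArg Complex.re h
    simpa [Matrix.trace, Matrix.diag, Matrix.mul_apply, Matrix.conjTranspose_apply,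
      Complex.normSq_eq_conj_mul_self, Complex.mul_re, Complex.normSq_apply] using this
  have hall : ∀ j ∈ Finset.univ, ∀ k ∈ Finset.univ, Complex.normSq (M k j) = 0 := by
    intro j _ k _
    have h1 := (Finset.sum_eq_zero_iff_of_nonneg (fun j _ =>
      Finset.sum_nonneg fun k _ => Complex.normSq_nonneg _)).mp hre j (Finset.mem_univ j)
    exact (Finset.sum_eq_zero_iff_of_nonneg fun k _ => Complex.normSq_nonneg _).mp h1 k
      (Finset.mem_univ k)
  ext i j
  simpa using Complex.normSq_eq_zero.mp (hall j (Finset.mem_univ j) i (Finset.mem_univ i))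

lemma sqrt_mul_eq_of_commute {X ρ : Matrix n n ℂ}
    (hX : X.PosSemidef) (hρ : ρ.IsHermitian) (h : ρ * X = X * ρ) :
    hX.sqrt * ρ * hX.sqrt = X * ρ := by
  set A := hX.sqrt with hAdef
  have hAh : Aᴴ = A := hX.posSemidef_sqrt.1
  have hAA : A * A = X := hX.sqrt_mul_self
  set C := ρ * A - A * ρ with hC
  have key : A * C + C * A = ρ * (A * A) - (A * A) * ρ := by rw [hC]; noncomm_ring
  rw [hAA, h, sub_self] at key
  set N := A * C with hN
  have hanti : C * A = -N := by rw [eq_neg_iff_add_eq_zero, add_comm]; exact key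
  have hCh : Cᴴ = -C := by
    rw [hC]
    simp only [Matrix.conjTranspose_sub, Matrix.conjTranspose_mul, hAh, hρ.eq]
    noncomm_ring
  have hNh : Nᴴ = N := by
    rw [hN, Matrix.conjTranspose_mul, hAh, hCh, Matrix.neg_mul, ← hN, hanti, neg_neg]
  have hNA : N * A = -(A * N) := by
    calc N * A = A * (C * A) := by rw [hN, Matrix.mul_assoc]
      _ = -(A * N) := by rw [hanti, Matrix.mul_neg]
  have htr0 : (N * N * A).trace = 0 := by
    have h1 : (N * N * A).trace = -((N * N * A).trace) := by
      calc (N * N * A).trace = (N * (N * A)).trace := by rw [Matrix.mul_assoc]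
        _ = -((N * (A * N)).trace) := by rw [hNA, Matrix.mul_neg, Matrix.trace_neg]
        _ = -((N * A * N).trace) := by rw [← Matrix.mul_assoc]
        _ = -((N * N * A).trace) := by rw [Matrix.trace_mul_cycle]
    have h2 : (2:ℂ) * (N * N * A).trace = 0 := by
      rw [two_mul]; exact add_eq_zero_iff_eq_neg.mpr h1
    exact (mul_eq_zero.mp h2).resolve_left (by norm_num)
  set G := hX.posSemidef_sqrt.sqrt with hG
  have hGh : Gᴴ = G := hX.posSemidef_sqrt.posSemidef_sqrt.1
  have hGG : G * G = A := hX.posSemidef_sqrt.sqrt_mul_self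
  have hNG : N * G = 0 := by
    apply trace_conjTranspose_mul_self_eq_zero'
    have e : (N * G)ᴴ * (N * G) = G * (N * (N * G)) := by
      rw [Matrix.conjTranspose_mul, hGh, hNh]; noncomm_ring
    have e2 : N * (N * G) * G = N * N * A := by rw [← hGG]; noncomm_ring
    rw [e, Matrix.trace_mul_comm, e2, htr0]
  have hNA0 : N * A = 0 := by rw [← hGG, ← Matrix.mul_assoc, hNG, Matrix.zero_mul]
  have hNN : Nᴴ * N = 0 := by
    have e3 : N * N = N * A * C := by rw [hN]; noncomm_ring
    rw [hNh, e3, hNA0, Matrix.zero_mul]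
  have hN0 : N = 0 := trace_conjTranspose_mul_self_eq_zero' (by rw [hNN, Matrix.trace_zero])
  have final : A * ρ * A = X * ρ + N := by rw [hN, hC, ← hAA]; noncomm_ring
  rw [final, hN0, add_zero]

end helpers

set_option maxHeartbeats 1600000 in
/-- Shadow bound: if `0 ≤ Λ ≤ I`, `Tr(ρΛ) ≥ 1 − λ` and
`μ₁Λ ≤ √Λ ρ √Λ ≤ μ₂Λ`, then `(1−λ)/μ₂ ≤ Tr Λ ≤ 1/μ₁`, and every `η`-shadow
`B` of `ρ` satisfies `Tr B ≥ (η − √(8λ))/μ₂` (and `Tr B ≥ (η − λ)/μ₂` if `ρ`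
and `Λ` commute). -/
theorem shadow_bound {D : ℕ} (Λ ρ : Matrix (Fin D) (Fin D) ℂ)
    (hΛ : Λ.PosSemidef) (hΛ1 : (1 - Λ).PosSemidef) (hρ : IsDensity ρ)
    (lam μ₁ μ₂ : ℝ) (hlam : 0 < lam) (hμ₁ : 0 < μ₁) (hμ₂ : 0 < μ₂)
    (htr : 1 - lam ≤ ((ρ * Λ).trace).re)
    (hlow : (hΛ.sqrt * ρ * hΛ.sqrt - (μ₁ : ℝ) • Λ).PosSemidef)
    (hup : ((μ₂ : ℝ) • Λ - hΛ.sqrt * ρ * hΛ.sqrt).PosSemidef) :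
    ((1 - lam) / μ₂ ≤ (Λ.trace).re ∧ (Λ.trace).re ≤ 1 / μ₁) ∧
      ∀ (η : ℝ) (B : Matrix (Fin D) (Fin D) ℂ),
        B.PosSemidef → (1 - B).PosSemidef → η ≤ ((ρ * B).trace).re →
          (η - Real.sqrt (8 * lam)) / μ₂ ≤ (B.trace).re ∧
            (ρ * Λ = Λ * ρ → (η - lam) / μ₂ ≤ (B.trace).re) := by
  obtain ⟨hρp, hρtr⟩ := hρ
  have hρh : ρᴴ = ρ := hρp.1
  set A := hΛ.sqrt with hAdef
  have hAh : Aᴴ = A := hΛ.posSemidef_sqrt.1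
  have hAA : A * A = Λ := hΛ.sqrt_mul_self
  set R := hρp.sqrt with hRdef
  have hRh : Rᴴ = R := hρp.posSemidef_sqrt.1
  have hRR : R * R = ρ := hρp.sqrt_mul_self
  have smulre : ∀ (r : ℝ) (M : Matrix (Fin D) (Fin D) ℂ),
      ((r • M).trace).re = r * (M.trace).re := by
    intro r M
    rw [Matrix.trace_smul, Complex.real_smul, Complex.mul_re]
    simp
  have trS : ((A * ρ * A).trace) = ((ρ * Λ).trace) := by
    rw [Matrix.trace_mul_cycle, hAA, Matrix.trace_mul_comm]
  -- upper/lower bounds on Tr Λ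
  have h2a := (Complex.nonneg_iff.mp (trace_nonneg' hup)).1
  rw [Matrix.trace_sub, Complex.sub_re, smulre, trS] at h2a
  have h2b := (Complex.nonneg_iff.mp (trace_nonneg' hlow)).1
  rw [Matrix.trace_sub, Complex.sub_re, smulre, trS] at h2b
  have hub : ((ρ * Λ).trace).re ≤ 1 := by
    have := trace_mul_re_mono hρp hΛ1
    rwa [Matrix.mul_one, hρtr, Complex.one_re] at this
  have hlamB : ((ρ * (1 - Λ)).trace).re ≤ lam := by
    rw [Matrix.mul_sub, Matrix.mul_one, Matrix.trace_sub, Complex.sub_re, hρtr,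
      Complex.one_re]
    linarith
  refine ⟨⟨by rw [div_le_iff₀ hμ₂]; nlinarith, by rw [le_div_iff₀ hμ₁]; nlinarith⟩, ?_⟩
  intro η B hB hB1 hηB
  have hBh : Bᴴ = B := hB.1
  -- C1 : Tr(S B) ≤ μ₂ Tr B
  have c1 : (((A * ρ * A) * B).trace).re ≤ μ₂ * (B.trace).re := by
    have s1 := trace_mul_re_mono hB hup
    rw [Matrix.mul_smul, smulre] at s1
    have s2 := trace_mul_re_mono hB hΛ1
    rw [Matrix.mul_one] at s2
    rw [Matrix.trace_mul_comm]
    have s3 : (B.trace).re = ((B * 1).trace).re := by rw [Matrix.mul_one]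
    nlinarith [mul_le_mul_of_nonneg_left s2 hμ₂.le]
  -- T and its properties
  set T := (1 : Matrix (Fin D) (Fin D) ℂ) - A with hTdef
  have hT : T.PosSemidef := one_sub_sqrt hΛ hΛ1
  have hTh : Tᴴ = T := hT.1
  set G := hΛ.posSemidef_sqrt.sqrt with hGdef
  have hGh : Gᴴ = G := hΛ.posSemidef_sqrt.posSemidef_sqrt.1
  have hGG : G * G = A := hΛ.posSemidef_sqrt.sqrt_mul_self
  have hGA : G * A = A * G := by rw [← hGG, Matrix.mul_assoc]
  have hTG : T * G = G * T := by
    rw [hTdef, Matrix.sub_mul, Matrix.mul_sub, Matrix.one_mul, Matrix.mul_one, hGA]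
  have hAT : A * T = G * T * G := by
    rw [← hGG, Matrix.mul_assoc, Matrix.mul_assoc, hTG]
  have hATpsd : (A * T).PosSemidef := by
    have := hT.conjTranspose_mul_mul_same G
    rw [hGh] at this
    rw [hAT]; exact this
  have hF1 : ((1 - Λ) - T * T).PosSemidef := by
    have e : (1 - Λ) - T * T = A * T + A * T := by rw [hTdef, ← hAA]; noncomm_ring
    rw [e]; exact hATpsd.add hATpsd
  obtain ⟨B', hB'h, hB'B'⟩ : ∃ B' : Matrix (Fin D) (Fin D) ℂ, B'ᴴ = B' ∧ B' * B' = B :=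
    ⟨hB.sqrt, hB.posSemidef_sqrt.1, hB.sqrt_mul_self⟩
  have hF2 : ((1 : Matrix (Fin D) (Fin D) ℂ) - B * B).PosSemidef := by
    have e : (1 : Matrix (Fin D) (Fin D) ℂ) - B * B
        = (1 - B) + B'ᴴ * (1 - B) * B' := by
      rw [hB'h, ← hB'B']; noncomm_ring
    rw [e]; exact hB1.add (hB1.conjTranspose_mul_mul_same B')
  -- Term 1
  have e1 : (R * T)ᴴ * (R * B) = T * ρ * B := by
    rw [Matrix.conjTranspose_mul, hTh, hRh, Matrix.mul_assoc,
      ← Matrix.mul_assoc R R B, hRR, ← Matrix.mul_assoc]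
  have e2 : (R * T)ᴴ * (R * T) = T * ρ * T := by
    rw [Matrix.conjTranspose_mul, hTh, hRh, Matrix.mul_assoc,
      ← Matrix.mul_assoc R R T, hRR, ← Matrix.mul_assoc]
  have e3 : (R * B)ᴴ * (R * B) = B * ρ * B := by
    rw [Matrix.conjTranspose_mul, hBh, hRh, Matrix.mul_assoc,
      ← Matrix.mul_assoc R R B, hRR, ← Matrix.mul_assoc]
  have cs1 := trace_cs (R * T) (R * B)
  rw [e1, e2, e3] at cs1
  have b1 : ((T * ρ * T).trace).re ≤ lam := by
    have etr : (T * ρ * T).trace = (ρ * (T * T)).trace := by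
      rw [Matrix.trace_mul_cycle, Matrix.trace_mul_comm]
    rw [etr]
    exact le_trans (trace_mul_re_mono hρp hF1) hlamB
  have b2 : ((B * ρ * B).trace).re ≤ 1 := by
    have etr : (B * ρ * B).trace = (ρ * (B * B)).trace := by
      rw [Matrix.trace_mul_cycle, Matrix.trace_mul_comm]
    rw [etr]
    have := trace_mul_re_mono hρp hF2
    rwa [Matrix.mul_one, hρtr, Complex.one_re] at this
  have t1 : ((T * ρ * B).trace).re ≤ Real.sqrt lam := by
    calc ((T * ρ * B).trace).re ≤ ‖(T * ρ * B).trace‖ := Complex.re_le_norm _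
      _ ≤ Real.sqrt (((T * ρ * T).trace).re) * Real.sqrt (((B * ρ * B).trace).re) := cs1
      _ ≤ Real.sqrt lam * 1 := by
          apply mul_le_mul (Real.sqrt_le_sqrt b1) ?_ (Real.sqrt_nonneg _) (Real.sqrt_nonneg _)
          calc Real.sqrt (((B * ρ * B).trace).re) ≤ Real.sqrt 1 := Real.sqrt_le_sqrt b2
            _ = 1 := Real.sqrt_one
      _ = Real.sqrt lam := mul_one _
  -- Term 2
  set Y2 := R * (T * (B * A)) with hY2
  have e4 : Rᴴ * Y2 = ρ * (T * (B * A)) := by rw [hRh, hY2, ← Matrix.mul_assoc, hRR]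
  have e5 : ((Rᴴ * R).trace).re = 1 := by rw [hRh, hRR, hρtr, Complex.one_re]
  have e6 : Y2ᴴ * Y2 = (A * (B * T)) * (ρ * (T * (B * A))) := by
    rw [hY2]
    simp only [Matrix.conjTranspose_mul, hAh, hBh, hTh, hRh]
    rw [← hRR]; noncomm_ring
  have etr2 : (Y2ᴴ * Y2).trace = (ρ * (T * (B * (Λ * (B * T))))).trace := by
    rw [e6, Matrix.trace_mul_comm]
    congr 1
    rw [← hAA]; noncomm_ring
  have hF4 : ((1 : Matrix (Fin D) (Fin D) ℂ) - B * (Λ * B)).PosSemidef := by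
    have hBΛB : (B * ((1 - Λ) * B)).PosSemidef := by
      have := hΛ1.conjTranspose_mul_mul_same B
      rw [hBh] at this
      rwa [Matrix.mul_assoc] at this
    have e : (1 : Matrix (Fin D) (Fin D) ℂ) - B * (Λ * B)
        = (1 - B * B) + B * ((1 - Λ) * B) := by noncomm_ring
    rw [e]; exact hF2.add hBΛB
  have hF3 : ((1 - Λ) - T * (B * (Λ * (B * T)))).PosSemidef := by
    have hconj : (T * ((1 - B * (Λ * B)) * T)).PosSemidef := by
      have := hF4.conjTranspose_mul_mul_same T
      rw [hTh] at this
      rwa [Matrix.mul_assoc] at this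
    have e : (1 - Λ) - T * (B * (Λ * (B * T)))
        = ((1 - Λ) - T * T) + T * ((1 - B * (Λ * B)) * T) := by noncomm_ring
    rw [e]; exact hF1.add hconj
  have b3 : ((ρ * (T * (B * (Λ * (B * T))))).trace).re ≤ lam :=
    le_trans (trace_mul_re_mono hρp hF3) hlamB
  have etr3 : ((A * (ρ * (T * B))).trace) = ((Rᴴ * Y2).trace) := by
    rw [e4, Matrix.trace_mul_comm]
    congr 1
    noncomm_ring
  have t2 : ((A * (ρ * (T * B))).trace).re ≤ Real.sqrt lam := by
    calc ((A * (ρ * (T * B))).trace).re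
        ≤ ‖(A * (ρ * (T * B))).trace‖ := Complex.re_le_norm _
      _ = ‖(Rᴴ * Y2).trace‖ := by rw [etr3]
      _ ≤ Real.sqrt ((Rᴴ * R).trace.re) * Real.sqrt ((Y2ᴴ * Y2).trace.re) := trace_cs R Y2
      _ ≤ 1 * Real.sqrt lam := by
          apply mul_le_mul ?_ ?_ (Real.sqrt_nonneg _) (by norm_num)
          · rw [e5, Real.sqrt_one]
          · rw [etr2]; exact Real.sqrt_le_sqrt b3
      _ = Real.sqrt lam := one_mul _
  have hsplit : ((ρ * B).trace).re = (((A * ρ * A) * B).trace).re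
      + ((T * ρ * B).trace).re + ((A * (ρ * (T * B))).trace).re := by
    have e : ρ * B = (A * ρ * A) * B + (T * ρ * B + A * (ρ * (T * B))) := by
      rw [hTdef]; noncomm_ring
    rw [e, Matrix.trace_add, Matrix.trace_add, Complex.add_re, Complex.add_re]
    ring
  have h8 : 2 * Real.sqrt lam ≤ Real.sqrt (8 * lam) := by
    have h4 : Real.sqrt (4 * lam) ≤ Real.sqrt (8 * lam) := Real.sqrt_le_sqrt (by nlinarith)
    calc 2 * Real.sqrt lam = Real.sqrt 4 * Real.sqrt lam := by
          rw [show (4:ℝ) = 2^2 by norm_num, Real.sqrt_sq (by norm_num : (0:ℝ) ≤ 2)]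
      _ = Real.sqrt (4 * lam) := (Real.sqrt_mul (by norm_num) lam).symm
      _ ≤ _ := h4
  constructor
  · rw [div_le_iff₀ hμ₂]
    nlinarith
  · intro hcomm
    have hS : A * ρ * A = Λ * ρ := sqrt_mul_eq_of_commute hΛ hρp.1 hcomm
    have hcomm' : ρ * (1 - Λ) = (1 - Λ) * ρ := by
      rw [Matrix.mul_sub, Matrix.sub_mul, Matrix.mul_one, Matrix.one_mul, hcomm]
    set W := hΛ1.sqrt with hWdef
    have hWh : Wᴴ = W := hΛ1.posSemidef_sqrt.1
    have hWW : W * W = 1 - Λ := hΛ1.sqrt_mul_self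
    have hW : W * ρ * W = (1 - Λ) * ρ := sqrt_mul_eq_of_commute hΛ1 hρp.1 hcomm'
    have hWpsd : (W * ρ * W).PosSemidef := by
      have := hρp.conjTranspose_mul_mul_same W
      rwa [hWh] at this
    have esplit2 : ρ * B = (A * ρ * A) * B + (W * ρ * W) * B := by
      rw [hS, hW, ← Matrix.add_mul]
      congr 1
      noncomm_ring
    have w1 : (((W * ρ * W) * B).trace).re ≤ lam := by
      have hm := trace_mul_re_mono hWpsd hB1
      rw [Matrix.mul_one] at hm
      have etr4 : (W * ρ * W).trace = (ρ * (1 - Λ)).trace := by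
        rw [Matrix.trace_mul_cycle, hWW, Matrix.trace_mul_comm]
      rw [etr4] at hm
      exact le_trans hm hlamB
    have hsp : ((ρ * B).trace).re
        = (((A * ρ * A) * B).trace).re + (((W * ρ * W) * B).trace).re := by
      rw [esplit2, Matrix.trace_add, Complex.add_re]
    rw [div_le_iff₀ hμ₂]
    nlinarith

end QIT
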